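/- Let F : ℂ × ℂ × ℂ → ℂ be a function, written F(x,y;α). Say that the three-leg relation holds on a quadrilateral (v0,v1,v2,v3) with parameter pair (α,β) if F(v0,v1;α) = F(v0,v2;α−β)·F(v0,v3;β). Assume: (i) F(x,y;α)·F(x,y;−α) = 1 for all x,y,α ∈ ℂ; (ii) for all v0,v1,v2,v3,α,β ∈ ℂ, the three-leg relation holds on (v0,v1,v2,v3) with (α,β) if and only if it holds on (v1,v2,v3,v0) with (β,α). Then for all x0,x1,x2,x3,x12,x23,x31,x123 ∈ ℂ and all α1,α2,α3 ∈ ℂ: if the three-leg relation holds on (x0,x1,x12,x2) with (α1,α2), on (x0,x2,x23,x3) with (α2,α3), on (x0,x3,x31,x1) with (α3,α1), and on (x1,x12,x123,x31) with (α2,α3), then it also holds on (x2,x23,x123,x12) with (α3,α1) and on (x3,x31,x123,x23) with (α1,α2). -/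
import Mathlib


/-- 3D consistency for quad-graph equations admitting a multiplicative
three-leg form: the three-leg relation on the three faces of the cube
adjacent to `x0`, together with the relation on one of the remaining faces,
implies the relations on the other two remaining faces. -/
theorem threeLeg_3D_consistency
    (F : ℂ → ℂ → ℂ → ℂ)
    (hsym : ∀ x y α : ℂ, F x y α * F x y (-α) = 1)
    (hcenter : ∀ v0 v1 v2 v3 α β : ℂ,
      (F v0 v1 α = F v0 v2 (α - β) * F v0 v3 β) ↔
      (F v1 v2 β = F v1 v3 (β - α) * F v1 v0 α))
    (x0 x1 x2 x3 x12 x23 x31 x123 α1 α2 α3 : ℂ)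
    (h12 : F x0 x1 α1 = F x0 x12 (α1 - α2) * F x0 x2 α2)
    (h23 : F x0 x2 α2 = F x0 x23 (α2 - α3) * F x0 x3 α3)
    (h31 : F x0 x3 α3 = F x0 x31 (α3 - α1) * F x0 x1 α1)
    (h123 : F x1 x12 α2 = F x1 x123 (α2 - α3) * F x1 x31 α3) :
    (F x2 x23 α3 = F x2 x123 (α3 - α1) * F x2 x12 α1) ∧
    (F x3 x31 α1 = F x3 x123 (α1 - α2) * F x3 x23 α2) := by
  have hne : ∀ x y α : ℂ, F x y α ≠ 0 := fun x y α =>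
    left_ne_zero_of_mul_eq_one (hsym x y α)
  -- face (x0,x1,x12,x2) centered at x1 and at x2
  have A1 : F x1 x12 α2 = F x1 x2 (α2 - α1) * F x1 x0 α1 :=
    (hcenter x0 x1 x12 x2 α1 α2).mp h12
  have A2 : F x2 x0 α2 = F x2 x1 (α2 - α1) * F x2 x12 α1 :=
    (hcenter x12 x2 x0 x1 α1 α2).mp ((hcenter x1 x12 x2 x0 α2 α1).mp A1)
  -- face (x0,x2,x23,x3) centered at x2 and at x3
  have B2 : F x2 x23 α3 = F x2 x3 (α3 - α2) * F x2 x0 α2 :=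
    (hcenter x0 x2 x23 x3 α2 α3).mp h23
  have B3 : F x3 x0 α3 = F x3 x2 (α3 - α2) * F x3 x23 α2 :=
    (hcenter x23 x3 x0 x2 α2 α3).mp ((hcenter x2 x23 x3 x0 α3 α2).mp B2)
  -- face (x0,x3,x31,x1) centered at x3 and at x1
  have C3 : F x3 x31 α1 = F x3 x1 (α1 - α3) * F x3 x0 α3 :=
    (hcenter x0 x3 x31 x1 α3 α1).mp h31
  have C1 : F x1 x0 α1 = F x1 x3 (α1 - α3) * F x1 x31 α3 :=
    (hcenter x31 x1 x0 x3 α3 α1).mp ((hcenter x3 x31 x1 x0 α1 α3).mp C3)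
  -- tetrahedron relation centered at x1
  have Tet1 : F x1 x123 (α2 - α3) =
      F x1 x2 ((α2 - α3) - (α1 - α3)) * F x1 x3 (α1 - α3) := by
    have harg : (α2 - α3) - (α1 - α3) = α2 - α1 := by ring
    rw [harg]
    apply mul_right_cancel₀ (hne x1 x31 α3)
    rw [← h123, A1, C1]; ring
  -- cycle tetrahedron to x2 and x3
  have Tcyc2 : F x2 x3 (α2 - α3) =
      F x2 x1 ((α2 - α3) - (α1 - α3)) * F x2 x123 (α1 - α3) :=
    (hcenter x123 x2 x3 x1 (α1 - α3) (α2 - α3)).mp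
      ((hcenter x1 x123 x2 x3 (α2 - α3) (α1 - α3)).mp Tet1)
  have Tcyc3 : F x3 x1 (α1 - α3) =
      F x3 x123 ((α1 - α3) - (α2 - α3)) * F x3 x2 (α2 - α3) :=
    (hcenter x2 x3 x1 x123 (α2 - α3) (α1 - α3)).mp Tcyc2
  have harg2 : (α2 - α3) - (α1 - α3) = α2 - α1 := by ring
  have harg3 : (α1 - α3) - (α2 - α3) = α1 - α2 := by ring
  rw [harg2] at Tcyc2
  rw [harg3] at Tcyc3
  -- inverse pairs from hsym
  have hs23 : F x2 x3 (α2 - α3) * F x2 x3 (α3 - α2) = 1 := by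
    have := hsym x2 x3 (α2 - α3); rwa [neg_sub] at this
  have hs2t : F x2 x123 (α1 - α3) * F x2 x123 (α3 - α1) = 1 := by
    have := hsym x2 x123 (α1 - α3); rwa [neg_sub] at this
  have hs32 : F x3 x2 (α2 - α3) * F x3 x2 (α3 - α2) = 1 := by
    have := hsym x3 x2 (α2 - α3); rwa [neg_sub] at this
  constructor
  · -- goal face centered at x2
    have key : F x2 x3 (α3 - α2) * F x2 x1 (α2 - α1) = F x2 x123 (α3 - α1) := by
      linear_combination (-(F x2 x3 (α3 - α2)) * F x2 x123 (α3 - α1)) * Tcyc2 +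
        F x2 x123 (α3 - α1) * hs23 +
        (-(F x2 x3 (α3 - α2)) * F x2 x1 (α2 - α1)) * hs2t
    rw [B2, A2, ← key]; ring
  · -- goal face centered at x3
    have key : F x3 x1 (α1 - α3) * F x3 x2 (α3 - α2) = F x3 x123 (α1 - α2) := by
      linear_combination F x3 x2 (α3 - α2) * Tcyc3 + F x3 x123 (α1 - α2) * hs32
    rw [C3, B3, ← key]; ring
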